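/- (Theorem B, algebraic form.) Let k ≥ 1 and let a ∈ ℝ[z₁,…,z_d] satisfy a(1,…,1) = 2^d. Then all formal partial derivatives D^j a with multi-index j ∈ ℕ^d, |j| < k, vanish at every point ε ∈ Z' (condition Z_k) if and only if there exist polynomials c_w ∈ ℝ[z₁,…,z_d], indexed by the finitely many k-tuples w = (Θ₁,…,Θ_k) of d×d integer matrices with nonzero 0-1 columns and det Θ_i = ±1, such that a = Σ_w c_w · 2^d · ∏_{i=1}^{k} q_{Θ_i} and Σ_w c_w(1,…,1) = 1. -/

import Mathlib

open MvPolynomial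

/-- For a `d×d` integer matrix `Θ` with 0-1 columns, the polynomial
`q_Θ(z) = ∏_{columns θ of Θ} (1 + z^θ)/2`, where `z^θ = z₁^{θ₁}⋯z_d^{θ_d}`. -/
noncomputable def qpoly {d : ℕ} (Θ : Matrix (Fin d) (Fin d) ℤ) : MvPolynomial (Fin d) ℝ :=
  ∏ c : Fin d, (C (1 / 2 : ℝ) * (1 + ∏ i : Fin d, X i ^ (Θ i c).toNat))

/-- The iterated formal partial derivative `D^j = ∏_i (∂/∂z_i)^{j_i}` associated with a
multi-index `j ∈ ℕ^d` (the partial derivatives commute, so the order is irrelevant). -/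
noncomputable def Dmulti {d : ℕ} (j : Fin d → ℕ) :
    Module.End ℝ (MvPolynomial (Fin d) ℝ) :=
  (List.finRange d).foldr (fun i op => ((pderiv i).toLinearMap ^ j i) * op) 1

/-! ### Auxiliary setup -/

open scoped Classical

abbrev MvP (d : ℕ) := MvPolynomial (Fin d) ℝ

/-- Admissibility of a matrix: 0-1 entries, nonzero columns, determinant ±1. -/
def Adm {d : ℕ} (Θ : Matrix (Fin d) (Fin d) ℤ) : Prop :=
  (∀ r s, Θ r s = 0 ∨ Θ r s = 1) ∧ (∀ s, ∃ r, Θ r s ≠ 0) ∧ (Θ.det = 1 ∨ Θ.det = -1)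

/-- The ideal generated by the `q_Θ` over admissible `Θ`. -/
noncomputable def J1 (d : ℕ) : Ideal (MvP d) :=
  Ideal.span {p | ∃ Θ, Adm Θ ∧ p = qpoly Θ}

/-- The maximal ideal of polynomials vanishing at a point. -/
noncomputable def Mpt {d : ℕ} (ε : Fin d → ℝ) : Ideal (MvP d) :=
  RingHom.ker (eval ε)

lemma mem_Mpt {d : ℕ} {ε : Fin d → ℝ} {p : MvP d} : p ∈ Mpt ε ↔ eval ε p = 0 :=
  RingHom.mem_ker

/-- `ε` is a vertex of the cube `{±1}^d`. -/
def IsPM {d : ℕ} (ε : Fin d → ℝ) : Prop := ∀ i, ε i = -1 ∨ ε i = 1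

/-! ### Evaluations of `qpoly` -/

lemma eval_one_qpoly {d : ℕ} (Θ : Matrix (Fin d) (Fin d) ℤ) :
    eval (fun _ => (1 : ℝ)) (qpoly Θ) = 1 := by
  rw [qpoly, map_prod]
  rw [Finset.prod_congr rfl (fun c _ => ?_), Finset.prod_const_one]
  rw [map_mul, map_add, map_prod]
  norm_num

lemma eval_pm_qpoly {d : ℕ} {Θ : Matrix (Fin d) (Fin d) ℤ} (hΘ : Adm Θ)
    {ε : Fin d → ℝ} (hε : IsPM ε) (hne : ε ≠ fun _ => 1) :
    eval ε (qpoly Θ) = 0 := by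
  obtain ⟨h01, hcol, hdet⟩ := hΘ
  -- the 0-1 pattern of ε as an element of (ZMod 2)^d
  set w : Fin d → ℕ := fun i => if ε i = 1 then 0 else 1 with hw
  set v : Fin d → ZMod 2 := fun i => (w i : ZMod 2) with hv
  set Mz : Matrix (Fin d) (Fin d) (ZMod 2) := Θ.map (Int.cast : ℤ → ZMod 2) with hMz
  have hMunit : IsUnit Mz := by
    rw [Matrix.isUnit_iff_isUnit_det]
    have : Mz.det = ((Θ.det : ℤ) : ZMod 2) := ((Int.castRingHom (ZMod 2)).map_det Θ).symm
    rw [this]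
    rcases hdet with h | h <;> rw [h] <;> decide
  have hvne : v ≠ 0 := by
    obtain ⟨i, hi⟩ := Function.ne_iff.mp hne
    intro h0
    have hv1 : v i = 1 := by simp only [hv, hw]; rw [if_neg hi]; norm_num
    rw [h0, Pi.zero_apply] at hv1
    exact absurd hv1 (by decide)
  have hvM : Matrix.vecMul v Mz ≠ 0 := by
    intro h0
    refine hvne (Matrix.vecMul_injective_iff_isUnit.mpr hMunit ?_)
    show Matrix.vecMul v Mz = Matrix.vecMul 0 Mz
    rw [h0, Matrix.zero_vecMul]
  obtain ⟨cc, hcc⟩ := Function.ne_iff.mp hvM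
  have hcc1 : ∑ r, v r * Mz r cc = 1 := by
    rw [Pi.zero_apply] at hcc
    simp only [Matrix.vecMul, dotProduct] at hcc
    revert hcc
    generalize (∑ r, v r * Mz r cc) = z
    revert z; decide
  -- the factor at column cc evaluates to 0
  rw [qpoly, map_prod]
  refine Finset.prod_eq_zero (Finset.mem_univ cc) ?_
  rw [map_mul, map_add, map_one, map_prod, eval_C]
  have hsign : ∀ i, ε i = (-1 : ℝ) ^ (w i) := by
    intro i
    rcases hε i with h | h
    · simp only [hw]; rw [if_neg (by rw [h]; norm_num), h, pow_one]
    · simp only [hw]; rw [if_pos h, h, pow_zero]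
  have hprod : ∏ i, eval ε (X i ^ (Θ i cc).toNat) = (-1 : ℝ) ^ (∑ i, (Θ i cc).toNat * w i) := by
    rw [← Finset.prod_pow_eq_pow_sum]
    refine Finset.prod_congr rfl (fun i _ => ?_)
    rw [map_pow, eval_X, hsign i, ← pow_mul, mul_comm (w i)]
  have hodd : Odd (∑ i, (Θ i cc).toNat * w i) := by
    rcases Nat.even_or_odd (∑ i, (Θ i cc).toNat * w i) with he | ho
    · exfalso
      have hcast : ((∑ i, (Θ i cc).toNat * w i : ℕ) : ZMod 2) = ∑ r, v r * Mz r cc := by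
        push_cast
        refine Finset.sum_congr rfl (fun i _ => ?_)
        rcases h01 i cc with h | h
        · simp [hMz, Matrix.map_apply, h]
        · simp [hMz, Matrix.map_apply, h, hv, mul_comm]
      have : ((∑ i, (Θ i cc).toNat * w i : ℕ) : ZMod 2) = 0 := by
        rw [ZMod.natCast_eq_zero_iff]
        exact he.two_dvd
      rw [hcast, hcc1] at this
      exact absurd this (by decide)
    · exact ho
  rw [hprod, hodd.neg_one_pow]
  norm_num

lemma qpoly_mem_Mpt {d : ℕ} {Θ : Matrix (Fin d) (Fin d) ℤ} (hΘ : Adm Θ)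
    {ε : Fin d → ℝ} (hε : IsPM ε) (hne : ε ≠ fun _ => 1) :
    qpoly Θ ∈ Mpt ε := mem_Mpt.mpr (eval_pm_qpoly hΘ hε hne)

/-! ### Derivatives and ideal powers -/

lemma pderiv_toLinearMap_apply {d : ℕ} (i : Fin d) (p : MvP d) :
    ((pderiv i).toLinearMap : Module.End ℝ (MvP d)) p = pderiv i p := rfl

lemma ppow_monomial {d : ℕ} (i : Fin d) (n : ℕ) (m : Fin d →₀ ℕ) (c : ℝ) :
    (((pderiv i).toLinearMap : Module.End ℝ (MvP d)) ^ n) (monomial m c)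
      = monomial (m - Finsupp.single i n) (c * ((m i).descFactorial n : ℝ)) := by
  induction n with
  | zero => simp
  | succ n ih =>
    rw [pow_succ', Module.End.mul_apply, ih, pderiv_toLinearMap_apply, pderiv_monomial]
    have h1 : m - Finsupp.single i n - Finsupp.single i 1 = m - Finsupp.single i (n + 1) := by
      rw [tsub_tsub, ← Finsupp.single_add]
    have h2 : (m - Finsupp.single i n) i = m i - n := by
      rw [Finsupp.tsub_apply, Finsupp.single_eq_same]
    rw [h1, h2]
    congr 1
    rw [Nat.descFactorial_succ]
    push_cast [Nat.cast_mul]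
    ring

lemma foldr_monomial {d : ℕ} (j : Fin d → ℕ) :
    ∀ (L : List (Fin d)), L.Nodup → ∀ (m : Fin d →₀ ℕ) (c : ℝ),
      (L.foldr (fun i op => ((pderiv i).toLinearMap ^ j i) * op)
          (1 : Module.End ℝ (MvP d))) (monomial m c)
        = monomial (m - (L.map (fun t => Finsupp.single t (j t))).sum)
            (c * ((L.map (fun t => (m t).descFactorial (j t))).prod : ℝ)) := by
  intro L
  induction L with
  | nil => intro _ m c; simp
  | cons i L' ih =>
    intro hnd m c
    have hi : i ∉ L' := (List.nodup_cons.mp hnd).1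
    have hnd' : L'.Nodup := (List.nodup_cons.mp hnd).2
    have hsum_i : ((L'.map (fun t => Finsupp.single t (j t))).sum) i = 0 := by
      clear ih hnd hnd'
      induction L' with
      | nil => simp
      | cons a L'' ihh =>
        have hia : i ≠ a := fun h => hi (h ▸ (List.mem_cons_self : a ∈ a :: L''))
        have hiL : i ∉ L'' := fun h => hi (List.mem_cons_of_mem a h)
        simp only [List.map_cons, List.sum_cons, Finsupp.add_apply,
          Finsupp.single_apply, if_neg (Ne.symm hia), ihh hiL, zero_add]
    rw [List.foldr_cons, Module.End.mul_apply, ih hnd' m c, ppow_monomial]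
    have hmi : (m - (L'.map (fun t => Finsupp.single t (j t))).sum) i = m i := by
      rw [Finsupp.tsub_apply, hsum_i, Nat.sub_zero]
    rw [hmi]
    congr 1
    · rw [tsub_tsub, List.map_cons, List.sum_cons, add_comm]
    · rw [List.map_cons, List.prod_cons]
      push_cast
      ring

lemma univ_sum_single_eq {d : ℕ} (j : Fin d → ℕ) :
    (∑ t : Fin d, Finsupp.single t (j t)) = Finsupp.equivFunOnFinite.symm j := by
  ext s
  rw [Finsupp.finset_sum_apply]
  have : ∀ t : Fin d, Finsupp.single t (j t) s = if t = s then j t else 0 := fun t =>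
    Finsupp.single_apply
  rw [Finset.sum_congr rfl (fun t _ => this t), Finset.sum_ite_eq' Finset.univ s j,
    if_pos (Finset.mem_univ s)]
  simp [Finsupp.equivFunOnFinite]

lemma Dmulti_monomial {d : ℕ} (j : Fin d → ℕ) (m : Fin d →₀ ℕ) (c : ℝ) :
    Dmulti j (monomial m c)
      = monomial (m - Finsupp.equivFunOnFinite.symm j)
          (c * ∏ i : Fin d, ((m i).descFactorial (j i) : ℝ)) := by
  rw [Dmulti, foldr_monomial j _ (List.nodup_finRange d)]
  have h1 : ((List.finRange d).map (fun t => Finsupp.single t (j t))).sum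
      = Finsupp.equivFunOnFinite.symm j := by
    rw [← List.sum_toFinset _ (List.nodup_finRange d), List.toFinset_finRange,
      univ_sum_single_eq]
  have h2 : (((List.finRange d).map (fun t => (m t).descFactorial (j t))).prod : ℕ)
      = ∏ i : Fin d, (m i).descFactorial (j i) := by
    rw [← List.prod_toFinset _ (List.nodup_finRange d), List.toFinset_finRange]
  rw [h1, h2]
  push_cast
  rfl

lemma eval_zero_monomial {d : ℕ} (m : Fin d →₀ ℕ) (c : ℝ) :
    eval (0 : Fin d → ℝ) (monomial m c) = if m = 0 then c else 0 := by
  rw [eval_monomial]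
  by_cases h : m = 0
  · subst h; simp [Finsupp.prod]
  · rw [if_neg h]
    obtain ⟨i, hi⟩ : ∃ i, m i ≠ 0 := by
      by_contra hc; push_neg at hc; exact h (Finsupp.ext hc)
    rw [Finsupp.prod, Finset.prod_eq_zero (Finsupp.mem_support_iff.mpr hi)
      (by simp [zero_pow hi] : (0 : Fin d → ℝ) i ^ m i = 0), mul_zero]

lemma eval0_Dmulti {d : ℕ} (j : Fin d → ℕ) (q : MvP d) :
    eval (0 : Fin d → ℝ) (Dmulti j q)
      = (∏ i : Fin d, ((j i).factorial : ℝ)) * coeff (Finsupp.equivFunOnFinite.symm j) q := by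
  set jF := Finsupp.equivFunOnFinite.symm j with hjF
  have hjFi : ∀ i, jF i = j i := fun i => by rw [hjF]; rfl
  conv_lhs => rw [q.as_sum]
  rw [map_sum (Dmulti j), map_sum (eval (0 : Fin d → ℝ))]
  have hterm : ∀ m ∈ q.support, eval (0 : Fin d → ℝ) (Dmulti j (monomial m (coeff m q)))
      = if m = jF then (∏ i : Fin d, ((j i).factorial : ℝ)) * coeff m q else 0 := by
    intro m _
    rw [Dmulti_monomial, eval_zero_monomial]
    by_cases hm : m = jF
    · rw [hm, tsub_self, if_pos rfl, if_pos rfl]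
      have hdesc : ∀ i : Fin d, ((jF i).descFactorial (j i) : ℝ) = ((j i).factorial : ℝ) :=
        fun i => by rw [hjFi i, Nat.descFactorial_self]
      rw [Finset.prod_congr rfl (fun i _ => hdesc i)]
      ring
    · rw [if_neg hm]
      by_cases hle : ∀ i, j i ≤ m i
      · have hne : m - jF ≠ 0 := by
          obtain ⟨i, hi⟩ : ∃ i, m i ≠ jF i := by
            by_contra hc; push_neg at hc; exact hm (Finsupp.ext hc)
          intro h0
          have : (m - jF) i = 0 := by rw [h0]; rfl
          rw [Finsupp.tsub_apply] at this
          have hle2 := Nat.le_of_sub_eq_zero this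
          rw [hjFi i] at hi hle2
          exact hi (le_antisymm hle2 (hle i))
        rw [if_neg hne]
      · push_neg at hle
        obtain ⟨i, hi⟩ := hle
        have : ((m i).descFactorial (j i) : ℝ) = 0 := by
          rw [Nat.descFactorial_eq_zero_iff_lt.mpr hi]; norm_num
        rw [Finset.prod_eq_zero (Finset.mem_univ i) this, mul_zero]
        split <;> rfl
  rw [Finset.sum_congr rfl hterm, Finset.sum_ite_eq' q.support jF
    (fun m => (∏ i : Fin d, ((j i).factorial : ℝ)) * coeff m q)]
  by_cases hmem : jF ∈ q.support
  · rw [if_pos hmem]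
  · rw [if_neg hmem, notMem_support_iff.mp hmem, mul_zero]

/-- The shift substitution `z ↦ z + ε`. -/
noncomputable def shiftE {d : ℕ} (ε : Fin d → ℝ) : MvP d →ₐ[ℝ] MvP d :=
  aeval (fun i => X i + C (ε i))

lemma shiftE_shiftE {d : ℕ} (ε : Fin d → ℝ) (p : MvP d) :
    shiftE (-ε) (shiftE ε p) = p := by
  have h : (shiftE (-ε)).comp (shiftE ε) = AlgHom.id ℝ (MvP d) := by
    apply MvPolynomial.algHom_ext
    intro i
    simp only [shiftE, AlgHom.comp_apply, aeval_X, map_add, aeval_C, AlgHom.id_apply,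
      Pi.neg_apply]
    rw [algebraMap_eq]
    rw [map_neg]
    ring
  calc shiftE (-ε) (shiftE ε p) = ((shiftE (-ε)).comp (shiftE ε)) p := rfl
    _ = p := by rw [h]; rfl

lemma eval_zero_shiftE {d : ℕ} (ε : Fin d → ℝ) (p : MvP d) :
    eval (0 : Fin d → ℝ) (shiftE ε p) = eval ε p := by
  have h : (eval (0 : Fin d → ℝ)).comp ((shiftE ε : MvP d →ₐ[ℝ] MvP d) : MvP d →+* MvP d)
      = eval ε := by
    apply MvPolynomial.ringHom_ext
    · intro a; simp [shiftE]
    · intro i; simp [shiftE]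
  calc eval (0 : Fin d → ℝ) (shiftE ε p)
      = ((eval (0 : Fin d → ℝ)).comp ((shiftE ε : MvP d →ₐ[ℝ] MvP d) : MvP d →+* MvP d)) p :=
        rfl
    _ = eval ε p := by rw [h]

lemma eval_eps_shiftE_neg {d : ℕ} (ε : Fin d → ℝ) (p : MvP d) :
    eval ε (shiftE (-ε) p) = eval (0 : Fin d → ℝ) p := by
  have h : (eval ε).comp ((shiftE (-ε) : MvP d →ₐ[ℝ] MvP d) : MvP d →+* MvP d)
      = eval (0 : Fin d → ℝ) := by
    apply MvPolynomial.ringHom_ext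
    · intro a; simp [shiftE]
    · intro i; simp [shiftE]
  calc eval ε (shiftE (-ε) p)
      = ((eval ε).comp ((shiftE (-ε) : MvP d →ₐ[ℝ] MvP d) : MvP d →+* MvP d)) p := rfl
    _ = eval (0 : Fin d → ℝ) p := by rw [h]

lemma pderiv_shiftE {d : ℕ} (ε : Fin d → ℝ) (i : Fin d) (p : MvP d) :
    pderiv i (shiftE ε p) = shiftE ε (pderiv i p) := by
  induction p using MvPolynomial.induction_on with
  | C a => simp [shiftE, aeval_C, pderiv_C]
  | add p q hp hq => simp only [map_add, hp, hq]
  | mul_X p n hp =>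
    rw [map_mul, pderiv_mul, pderiv_mul, map_add, map_mul, map_mul, hp]
    have hXn : shiftE ε (X n) = X n + C (ε n) := by simp [shiftE]
    have hpd : pderiv i (X n + C (ε n) : MvP d) = pderiv i (X n : MvP d) := by
      rw [map_add, pderiv_C, add_zero]
    rw [hXn, hpd]
    have hconst : shiftE ε (pderiv i (X n : MvP d)) = pderiv i (X n : MvP d) := by
      rw [pderiv_X]
      by_cases h : n = i
      · subst h; rw [Pi.single_eq_same]; simp
      · rw [Pi.single_eq_of_ne h]; simp
    rw [hconst]

lemma ppow_shiftE {d : ℕ} (ε : Fin d → ℝ) (i : Fin d) (n : ℕ) (p : MvP d) :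
    (((pderiv i).toLinearMap : Module.End ℝ (MvP d)) ^ n) (shiftE ε p)
      = shiftE ε ((((pderiv i).toLinearMap : Module.End ℝ (MvP d)) ^ n) p) := by
  induction n generalizing p with
  | zero => simp
  | succ n ih =>
    rw [pow_succ, Module.End.mul_apply, Module.End.mul_apply, pderiv_toLinearMap_apply,
      pderiv_toLinearMap_apply, pderiv_shiftE, ih]

lemma Dmulti_shiftE {d : ℕ} (ε : Fin d → ℝ) (j : Fin d → ℕ) (p : MvP d) :
    Dmulti j (shiftE ε p) = shiftE ε (Dmulti j p) := by
  rw [Dmulti]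
  induction (List.finRange d) generalizing p with
  | nil => simp
  | cons i L ih =>
    rw [List.foldr_cons, Module.End.mul_apply, Module.End.mul_apply, ih, ppow_shiftE]

lemma eval_eps_Dmulti {d : ℕ} (ε : Fin d → ℝ) (j : Fin d → ℕ) (p : MvP d) :
    eval ε (Dmulti j p)
      = (∏ i : Fin d, ((j i).factorial : ℝ))
          * coeff (Finsupp.equivFunOnFinite.symm j) (shiftE ε p) := by
  rw [← eval_zero_shiftE ε (Dmulti j p), ← Dmulti_shiftE, eval0_Dmulti]

/-- weight of a multi-index -/
def wt {d : ℕ} (m : Fin d →₀ ℕ) : ℕ := ∑ i : Fin d, m i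

lemma wt_add {d : ℕ} (u v : Fin d →₀ ℕ) : wt (u + v) = wt u + wt v := by
  rw [wt, wt, wt, ← Finset.sum_add_distrib]
  exact Finset.sum_congr rfl fun i _ => Finsupp.add_apply u v i

lemma wt_eq_zero {d : ℕ} {v : Fin d →₀ ℕ} (h : wt v = 0) : v = 0 := by
  rw [wt] at h
  ext i
  exact (Finset.sum_eq_zero_iff.mp h) i (Finset.mem_univ i)

lemma eval_zero_eq_coeff {d : ℕ} (p : MvP d) :
    eval (0 : Fin d → ℝ) p = coeff 0 p := by
  conv_lhs => rw [p.as_sum]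
  rw [map_sum (eval (0 : Fin d → ℝ))]
  rw [Finset.sum_congr rfl (fun m _ => eval_zero_monomial m (coeff m p)),
    Finset.sum_ite_eq' p.support 0 (fun m => coeff m p)]
  by_cases h : (0 : Fin d →₀ ℕ) ∈ p.support
  · rw [if_pos h]
  · rw [if_neg h, notMem_support_iff.mp h]

lemma prod_pow_mem_pow {R : Type*} [CommRing R] (I : Ideal R) {ι : Type*} (s : Finset ι)
    (f : ι → R) (n : ι → ℕ) (hf : ∀ i ∈ s, f i ∈ I) :
    (∏ i ∈ s, f i ^ n i) ∈ I ^ (∑ i ∈ s, n i) := by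
  classical
  induction s using Finset.induction_on with
  | empty => simp [Ideal.one_eq_top]
  | @insert a s ha ih =>
    rw [Finset.prod_insert ha, Finset.sum_insert ha, pow_add]
    exact Ideal.mul_mem_mul (Ideal.pow_mem_pow (hf a (Finset.mem_insert_self a s)) _)
      (ih fun i hi => hf i (Finset.mem_insert_of_mem hi))

lemma Mpt0_pow_iff {d : ℕ} (k : ℕ) (p : MvP d) :
    p ∈ (Mpt (0 : Fin d → ℝ)) ^ k ↔ ∀ m : Fin d →₀ ℕ, wt m < k → coeff m p = 0 := by
  constructor
  · intro hp
    induction k generalizing p with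
    | zero => intro m hm; omega
    | succ k ih =>
      rw [pow_succ] at hp
      refine Submodule.mul_induction_on hp ?_ ?_
      · intro r hr s hs m hm
        rw [coeff_mul]
        refine Finset.sum_eq_zero fun x hx => ?_
        have hxm : x.1 + x.2 = m := Finset.HasAntidiagonal.mem_antidiagonal.mp hx
        by_cases h1 : wt x.1 < k
        · rw [ih r hr x.1 h1, zero_mul]
        · have hwt : wt x.1 + wt x.2 = wt m := by rw [← wt_add, hxm]
          have h2 : wt x.2 = 0 := by omega
          rw [wt_eq_zero h2, ← eval_zero_eq_coeff, mem_Mpt.mp hs, mul_zero]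
      · intro x y hx hy m hm
        rw [coeff_add, hx m hm, hy m hm, add_zero]
  · intro h
    have hX : ∀ i : Fin d, (X i : MvP d) ∈ Mpt (0 : Fin d → ℝ) := fun i =>
      mem_Mpt.mpr (by simp)
    suffices h2 : (∑ m ∈ p.support, monomial m (coeff m p)) ∈ (Mpt (0 : Fin d → ℝ)) ^ k by
      rw [← p.as_sum] at h2; exact h2
    refine Ideal.sum_mem _ fun m hm => ?_
    have hwt : k ≤ wt m := by
      by_contra hc
      push_neg at hc
      exact (mem_support_iff.mp hm) (h m hc)
    rw [monomial_eq]
    refine Ideal.mul_mem_left _ _ ?_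
    have hmem : (m.prod fun n e => (X n : MvP d) ^ e) ∈
        (Mpt (0 : Fin d → ℝ)) ^ (∑ i ∈ m.support, m i) := by
      rw [Finsupp.prod]
      exact prod_pow_mem_pow _ _ _ _ fun i _ => hX i
    have hsum : (∑ i ∈ m.support, m i) = wt m := by
      rw [wt]
      exact Finset.sum_subset (Finset.subset_univ _)
        (fun x _ hx => Finsupp.notMem_support_iff.mp hx)
    rw [hsum] at hmem
    exact Ideal.pow_le_pow_right hwt hmem

lemma Mpt_pow_iff {d : ℕ} (ε : Fin d → ℝ) (k : ℕ) (p : MvP d) :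
    p ∈ (Mpt ε) ^ k ↔ ∀ m : Fin d →₀ ℕ, wt m < k → coeff m (shiftE ε p) = 0 := by
  rw [← Mpt0_pow_iff]
  constructor
  · intro hp
    have h1 : shiftE ε p ∈ Ideal.map ((shiftE ε : MvP d →ₐ[ℝ] MvP d) : MvP d →+* MvP d)
        ((Mpt ε) ^ k) := Ideal.mem_map_of_mem _ hp
    rw [Ideal.map_pow] at h1
    have hle : Ideal.map ((shiftE ε : MvP d →ₐ[ℝ] MvP d) : MvP d →+* MvP d) (Mpt ε)
        ≤ Mpt (0 : Fin d → ℝ) := by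
      rw [Ideal.map_le_iff_le_comap]
      intro x hx
      rw [Ideal.mem_comap]
      exact mem_Mpt.mpr (by rw [RingHom.coe_coe, eval_zero_shiftE]; exact mem_Mpt.mp hx)
    exact Ideal.pow_right_mono hle k h1
  · intro hp
    have h1 : shiftE (-ε) (shiftE ε p)
        ∈ Ideal.map ((shiftE (-ε) : MvP d →ₐ[ℝ] MvP d) : MvP d →+* MvP d)
          ((Mpt (0 : Fin d → ℝ)) ^ k) := Ideal.mem_map_of_mem _ hp
    rw [shiftE_shiftE, Ideal.map_pow] at h1
    have hle : Ideal.map ((shiftE (-ε) : MvP d →ₐ[ℝ] MvP d) : MvP d →+* MvP d)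
        (Mpt (0 : Fin d → ℝ)) ≤ Mpt ε := by
      rw [Ideal.map_le_iff_le_comap]
      intro x hx
      rw [Ideal.mem_comap]
      exact mem_Mpt.mpr (by rw [RingHom.coe_coe, eval_eps_shiftE_neg]; exact mem_Mpt.mp hx)
    exact Ideal.pow_right_mono hle k h1

lemma zeroCond_iff_pow {d : ℕ} (ε : Fin d → ℝ) (k : ℕ) (a : MvP d) :
    (∀ j : Fin d → ℕ, (∑ i, j i) < k → eval ε (Dmulti j a) = 0) ↔ a ∈ (Mpt ε) ^ k := by
  rw [Mpt_pow_iff]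
  have hfac : ∀ j : Fin d → ℕ, (∏ i : Fin d, ((j i).factorial : ℝ)) ≠ 0 := fun j =>
    Finset.prod_ne_zero_iff.mpr fun i _ => Nat.cast_ne_zero.mpr (Nat.factorial_ne_zero _)
  constructor
  · intro H m hm
    have hj : (∑ i, (m : Fin d → ℕ) i) < k := hm
    have := H (fun i => m i) hj
    rw [eval_eps_Dmulti] at this
    have hmm : Finsupp.equivFunOnFinite.symm (fun i => m i) = m := by
      rw [show (fun i => m i) = ⇑m from rfl, Finsupp.equivFunOnFinite_symm_coe]
    rw [hmm] at this
    exact (mul_eq_zero.mp this).resolve_left (hfac _)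
  · intro H j hj
    rw [eval_eps_Dmulti, H (Finsupp.equivFunOnFinite.symm j) (by simpa [wt] using hj),
      mul_zero]

/-! ### Renaming and embedding lemmas for `J1` -/

lemma rename_qpoly {d : ℕ} (σ : Equiv.Perm (Fin d)) (Θ : Matrix (Fin d) (Fin d) ℤ) :
    rename σ (qpoly Θ) = qpoly (fun r c => Θ (σ.symm r) c) := by
  unfold qpoly; rw [map_prod]
  refine Finset.prod_congr rfl fun c _ => ?_
  rw [map_mul, map_add, map_one, map_prod, rename_C]
  congr 2
  calc ∏ i, rename σ (X i ^ (Θ i c).toNat)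
      = ∏ i, (X (σ i) : MvP d) ^ (Θ i c).toNat := by
        refine Finset.prod_congr rfl fun i _ => ?_
        rw [map_pow, rename_X]
    _ = ∏ r, (X r : MvP d) ^ (Θ (σ.symm r) c).toNat := by
        rw [← Equiv.prod_comp σ (fun r => (X r : MvP d) ^ (Θ (σ.symm r) c).toNat)]
        refine Finset.prod_congr rfl fun i _ => by rw [Equiv.symm_apply_apply]

lemma adm_permute {d : ℕ} (σ : Equiv.Perm (Fin d)) {Θ : Matrix (Fin d) (Fin d) ℤ}
    (hΘ : Adm Θ) : Adm (fun r c => Θ (σ.symm r) c) := by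
  obtain ⟨h01, hcol, hdet⟩ := hΘ
  refine ⟨fun r s => h01 _ s, fun s => ?_, ?_⟩
  · obtain ⟨r, hr⟩ := hcol s
    refine ⟨σ r, ?_⟩
    show Θ (σ.symm (σ r)) s ≠ 0
    rwa [Equiv.symm_apply_apply]
  · have hsub : (fun r c => Θ (σ.symm r) c) = Θ.submatrix σ.symm id := rfl
    rw [hsub, Matrix.det_permute]
    rcases Int.units_eq_one_or (Equiv.Perm.sign σ.symm) with h | h <;>
      rcases hdet with h2 | h2 <;> rw [h, h2] <;> simp

lemma rename_mem_J1 {d : ℕ} (σ : Equiv.Perm (Fin d)) {p : MvP d} (hp : p ∈ J1 d) :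
    rename σ p ∈ J1 d := by
  refine Submodule.span_induction ?_ ?_ ?_ ?_ hp
  · rintro x ⟨Θ, hΘ, rfl⟩
    rw [rename_qpoly]
    exact Ideal.subset_span ⟨_, adm_permute σ hΘ, rfl⟩
  · simp
  · intro x y _ _ hx hy
    rw [map_add]
    exact Ideal.add_mem _ hx hy
  · intro a x _ hx
    rw [smul_eq_mul, map_mul]
    exact Ideal.mul_mem_left _ _ hx

/-- extension of an admissible matrix by a new variable as variable 0, with 0-1 column `β`. -/
def extMat {d : ℕ} (Θ' : Matrix (Fin d) (Fin d) ℤ) (β : Fin (d + 1) → ℕ) :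
    Matrix (Fin (d + 1)) (Fin (d + 1)) ℤ := fun r c =>
  Fin.cases ((β r : ℤ)) (fun c' => Fin.cases 0 (fun r' => Θ' r' c') r) c

lemma extMat_zero {d : ℕ} (Θ' : Matrix (Fin d) (Fin d) ℤ) (β : Fin (d + 1) → ℕ) (r : Fin (d + 1)) :
    extMat Θ' β r 0 = (β r : ℤ) := rfl

lemma extMat_succ_zero {d : ℕ} (Θ' : Matrix (Fin d) (Fin d) ℤ) (β : Fin (d + 1) → ℕ) (c' : Fin d) :
    extMat Θ' β 0 c'.succ = 0 := by
  simp [extMat]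

lemma extMat_succ_succ {d : ℕ} (Θ' : Matrix (Fin d) (Fin d) ℤ) (β : Fin (d + 1) → ℕ) (r' c' : Fin d) :
    extMat Θ' β r'.succ c'.succ = Θ' r' c' := by
  simp [extMat]

lemma adm_extMat {d : ℕ} {Θ' : Matrix (Fin d) (Fin d) ℤ} (hΘ : Adm Θ')
    (β : Fin (d + 1) → ℕ) (hβ : ∀ r, β r ≤ 1) (hβ0 : β 0 = 1) : Adm (extMat Θ' β) := by
  obtain ⟨h01, hcol, hdet⟩ := hΘ
  refine ⟨?_, ?_, ?_⟩
  · intro r c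
    refine Fin.cases ?_ (fun c' => ?_) c
    · rw [extMat_zero]
      rcases Nat.le_one_iff_eq_zero_or_eq_one.mp (hβ r) with h | h <;> rw [h] <;> simp
    · refine Fin.cases ?_ (fun r' => ?_) r
      · rw [extMat_succ_zero]; left; rfl
      · rw [extMat_succ_succ]; exact h01 r' c'
  · intro c
    refine Fin.cases ?_ (fun c' => ?_) c
    · exact ⟨0, by rw [extMat_zero, hβ0]; exact one_ne_zero⟩
    · obtain ⟨r', hr'⟩ := hcol c'
      exact ⟨r'.succ, by rwa [extMat_succ_succ]⟩
  · have hrow : ∀ j : Fin (d + 1), j ≠ 0 → extMat Θ' β 0 j = 0 := by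
      intro j hj
      obtain ⟨c', rfl⟩ := Fin.exists_succ_eq.mpr hj
      exact extMat_succ_zero Θ' β c'
    have hdet2 : (extMat Θ' β).det = Θ'.det := by
      rw [Matrix.det_succ_row_zero]
      rw [Finset.sum_eq_single 0]
      · rw [extMat_zero, hβ0]
        have hsub : (extMat Θ' β).submatrix Fin.succ (Fin.succAbove 0) = Θ' := by
          ext r' c'
          rw [Fin.succAbove_zero, Matrix.submatrix_apply, extMat_succ_succ]
        rw [hsub]
        simp
      · intro j _ hj
        rw [hrow j hj, mul_zero, zero_mul]
      · intro h
        exact absurd (Finset.mem_univ 0) h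
    rw [hdet2]
    exact hdet

lemma qpoly_extMat {d : ℕ} (Θ' : Matrix (Fin d) (Fin d) ℤ) (β : Fin (d + 1) → ℕ) :
    qpoly (extMat Θ' β)
      = (C (1 / 2 : ℝ) * (1 + ∏ r, X r ^ β r)) * rename Fin.succ (qpoly Θ') := by
  have h0 : (C (1 / 2 : ℝ) * (1 + ∏ i : Fin (d + 1), X i ^ (extMat Θ' β i 0).toNat))
      = C (1 / 2 : ℝ) * (1 + ∏ r, X r ^ β r) := by
    have : (∏ i : Fin (d + 1), (X i : MvP (d + 1)) ^ (extMat Θ' β i 0).toNat)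
        = ∏ r, X r ^ β r := by
      refine Finset.prod_congr rfl fun r _ => ?_
      rw [extMat_zero, Int.toNat_natCast]
    rw [this]
  have h1 : (∏ c' : Fin d, (C (1 / 2 : ℝ)
        * (1 + ∏ i : Fin (d + 1), X i ^ (extMat Θ' β i (Fin.succ c')).toNat)))
      = rename Fin.succ (qpoly Θ') := by
    rw [qpoly, map_prod (rename (R := ℝ) (Fin.succ : Fin d → Fin (d + 1)))
      (fun c => C (1 / 2 : ℝ) * (1 + ∏ i : Fin d, X i ^ (Θ' i c).toNat)) Finset.univ]
    refine Finset.prod_congr rfl fun c' _ => ?_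
    rw [map_mul, map_add, map_one, map_prod, rename_C]
    have : (∏ i : Fin (d + 1), (X i : MvP (d + 1)) ^ (extMat Θ' β i (Fin.succ c')).toNat)
        = ∏ r' : Fin d, rename Fin.succ ((X r' : MvP d) ^ (Θ' r' c').toNat) := by
      rw [Fin.prod_univ_succ, extMat_succ_zero]
      simp only [Int.toNat_zero, pow_zero, one_mul]
      refine Finset.prod_congr rfl fun r' _ => ?_
      rw [map_pow, rename_X, extMat_succ_succ]
    rw [this]
  rw [qpoly, Fin.prod_univ_succ, h0, h1]

lemma E1 {d : ℕ} (β : Fin (d + 1) → ℕ) (hβ : ∀ r, β r ≤ 1) (hβ0 : β 0 = 1)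
    {p : MvP d} (hp : p ∈ J1 d) :
    (rename Fin.succ p) * (1 + ∏ r, X r ^ β r) ∈ J1 (d + 1) := by
  refine Submodule.span_induction ?_ ?_ ?_ ?_ hp
  · rintro x ⟨Θ', hΘ', rfl⟩
    have : (rename Fin.succ (qpoly Θ')) * (1 + ∏ r, X r ^ β r)
        = C (2 : ℝ) * qpoly (extMat Θ' β) := by
      rw [qpoly_extMat]
      rw [← mul_assoc, ← mul_assoc, ← C_mul]
      norm_num
      ring
    rw [this]
    exact Ideal.mul_mem_left _ _ (Ideal.subset_span ⟨_, adm_extMat hΘ' β hβ hβ0, rfl⟩)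
  · simp
  · intro x y _ _ hx hy
    rw [map_add, add_mul]
    exact Ideal.add_mem _ hx hy
  · intro a x _ hx
    rw [smul_eq_mul, map_mul, mul_assoc]
    exact Ideal.mul_mem_left _ _ hx

lemma exists_perm_01 {n : ℕ} (a b : Fin (n + 2)) (hab : a ≠ b) :
    ∃ σ : Equiv.Perm (Fin (n + 2)), σ 0 = a ∧ σ 1 = b := by
  set s : Fin (n + 2) := (Equiv.swap 0 a) b with hs
  refine ⟨(Equiv.swap 1 s).trans (Equiv.swap 0 a), ?_, ?_⟩
  · show (Equiv.swap 0 a) ((Equiv.swap 1 s) 0) = a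
    have h0s : (0 : Fin (n + 2)) ≠ s := by
      intro h
      have : (Equiv.swap 0 a) ((Equiv.swap 0 a) b) = (Equiv.swap 0 a) 0 := by rw [← hs, ← h]
      rw [Equiv.swap_apply_self, Equiv.swap_apply_left] at this
      exact hab this.symm
    rw [Equiv.swap_apply_of_ne_of_ne (Fin.ne_of_val_ne (by simp) : (0 : Fin (n+2)) ≠ 1) h0s,
      Equiv.swap_apply_left]
  · show (Equiv.swap 0 a) ((Equiv.swap 1 s) 1) = b
    rw [Equiv.swap_apply_left, hs, Equiv.swap_apply_self]

lemma PL {d : ℕ} (hKLA : ∀ i' : Fin (d + 1), (X i' ^ 2 - 1 : MvP (d + 1)) ∈ J1 (d + 1))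
    (i j : Fin (d + 2)) (hij : i ≠ j) (β : Fin (d + 2) → ℕ) (hβ : ∀ r, β r ≤ 1)
    (hβj : β j = 1) :
    (X i ^ 2 - 1 : MvP (d + 2)) * (1 + ∏ r, X r ^ β r) ∈ J1 (d + 2) := by
  obtain ⟨σ, hσ0, hσ1⟩ := exists_perm_01 j i (Ne.symm hij)
  set β' : Fin (d + 2) → ℕ := fun r => β (σ r) with hβ'
  have hβ'0 : β' 0 = 1 := by show β (σ 0) = 1; rw [hσ0, hβj]
  have hE := E1 β' (fun r => hβ (σ r)) hβ'0 (hKLA 0)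
  have hR := rename_mem_J1 σ hE
  rw [map_mul, rename_rename] at hR
  have hA : rename (σ ∘ Fin.succ) (X 0 ^ 2 - 1 : MvP (d + 1)) = (X i ^ 2 - 1 : MvP (d + 2)) := by
    rw [map_sub, map_one, map_pow, rename_X]
    have : (σ ∘ Fin.succ) 0 = i := by
      show σ (Fin.succ 0) = i
      rw [show Fin.succ (0 : Fin (d + 1)) = (1 : Fin (d + 2)) from rfl, hσ1]
    rw [this]
  have hB : rename σ (1 + ∏ r, X r ^ β' r) = 1 + ∏ r, (X r : MvP (d + 2)) ^ β r := by
    rw [map_add, map_one, map_prod]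
    congr 1
    calc ∏ r, rename σ ((X r : MvP (d + 2)) ^ β' r)
        = ∏ r, (fun t => (X t : MvP (d + 2)) ^ β t) (σ r) := by
          refine Finset.prod_congr rfl fun r _ => ?_
          rw [map_pow, rename_X, hβ']
      _ = ∏ r, (X r : MvP (d + 2)) ^ β r :=
          Equiv.prod_comp σ fun t => (X t : MvP (d + 2)) ^ β t
  rwa [hA, hB] at hR

lemma single_pow_prod {n : ℕ} (t : Fin n) :
    (∏ r, (X r : MvP n) ^ (if r = t then 1 else 0)) = X t := by
  have h : ∀ r : Fin n, (X r : MvP n) ^ (if r = t then 1 else 0)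
      = if r = t then X t else 1 := by
    intro r
    by_cases hr : r = t
    · rw [if_pos hr, if_pos hr, hr, pow_one]
    · rw [if_neg hr, if_neg hr, pow_zero]
  rw [Finset.prod_congr rfl fun r _ => h r, Finset.prod_ite_eq' Finset.univ t fun _ => X t,
    if_pos (Finset.mem_univ t)]

lemma KLA : ∀ (d : ℕ) (i : Fin d), (X i ^ 2 - 1 : MvP d) ∈ J1 d := by
  intro d
  induction d with
  | zero => exact fun i => i.elim0
  | succ d ih =>
    intro i
    match d, ih, i with
    | 0, _, i =>
      -- dimension 1
      have hi : i = 0 := by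
        have := i.2
        ext
        omega
      set Θ1 : Matrix (Fin 1) (Fin 1) ℤ := fun _ _ => 1 with hΘ1
      have hadm : Adm Θ1 := ⟨fun r s => Or.inr rfl, fun s => ⟨0, one_ne_zero⟩,
        Or.inl (by rw [Matrix.det_fin_one])⟩
      have hq : qpoly Θ1 = C (1 / 2 : ℝ) * (1 + X 0) := by
        rw [qpoly, Fin.prod_univ_one, Fin.prod_univ_one]
        norm_num
      have hC2q : C (2 : ℝ) * qpoly Θ1 = 1 + X 0 := by
        rw [hq, ← mul_assoc, ← C_mul]
        norm_num
      have hfact : (X i ^ 2 - 1 : MvP 1) = ((X 0 - 1) * C (2 : ℝ)) * qpoly Θ1 := by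
        rw [hi, mul_assoc, hC2q]
        ring
      rw [hfact]
      exact Ideal.mul_mem_left _ _ (Ideal.subset_span ⟨Θ1, hadm, rfl⟩)
    | 1, _, i =>
      -- dimension 2
      set ΘA : Matrix (Fin 2) (Fin 2) ℤ := (1 : Matrix (Fin 2) (Fin 2) ℤ) with hΘA
      set ΘB : Matrix (Fin 2) (Fin 2) ℤ :=
        (fun r c => if c = 1 then 1 else if r = 0 then 1 else 0) with hΘB
      have hadmA : Adm ΘA := by
        refine ⟨fun r s => ?_, fun s => ⟨s, by simp [hΘA, Matrix.one_apply]⟩, Or.inl ?_⟩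
        · rw [hΘA, Matrix.one_apply]
          split
          · right; rfl
          · left; rfl
        · rw [hΘA, Matrix.det_one]
      have hadmB : Adm ΘB := by
        refine ⟨fun r s => ?_, fun s => ⟨0, ?_⟩, Or.inl ?_⟩
        · rw [hΘB]
          dsimp only
          split
          · right; rfl
          · split
            · right; rfl
            · left; rfl
        · rw [hΘB]
          dsimp only
          split
          · exact one_ne_zero
          · rw [if_pos rfl]; exact one_ne_zero
        · rw [Matrix.det_fin_two]
          rw [hΘB]
          norm_num
      have hqA : qpoly ΘA = C (1 / 2 : ℝ) * (1 + X 0) * (C (1 / 2 : ℝ) * (1 + X 1)) := by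
        rw [qpoly, Fin.prod_univ_two]
        congr 2
        · rw [Fin.prod_univ_two]
          simp [hΘA, Matrix.one_apply]
        · rw [Fin.prod_univ_two]
          simp [hΘA, Matrix.one_apply]
      have hqB : qpoly ΘB
          = C (1 / 2 : ℝ) * (1 + X 0) * (C (1 / 2 : ℝ) * (1 + X 0 * X 1)) := by
        rw [qpoly, Fin.prod_univ_two]
        congr 2
        · rw [Fin.prod_univ_two]
          simp [hΘB]
        · rw [Fin.prod_univ_two]
          simp [hΘB]
      have hC441 : (C (4 : ℝ) : MvP 2) * C (1 / 2 : ℝ) * C (1 / 2 : ℝ) = 1 := by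
        rw [← C_mul, ← C_mul]
        norm_num
      have hA4 : C (4 : ℝ) * qpoly ΘA = (1 + X 0) * (1 + X 1) := by
        rw [hqA]
        have harr : (C (4 : ℝ) * (C (1 / 2 : ℝ) * (1 + X 0) * (C (1 / 2 : ℝ) * (1 + X 1)))
              : MvP 2)
            = (C (4 : ℝ) * C (1 / 2 : ℝ) * C (1 / 2 : ℝ)) * ((1 + X 0) * (1 + X 1)) := by
          ring
        rw [harr, hC441, one_mul]
      have hB4 : C (4 : ℝ) * qpoly ΘB = (1 + X 0) * (1 + X 0 * X 1) := by
        rw [hqB]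
        have harr : (C (4 : ℝ) * (C (1 / 2 : ℝ) * (1 + X 0) * (C (1 / 2 : ℝ) * (1 + X 0 * X 1)))
              : MvP 2)
            = (C (4 : ℝ) * C (1 / 2 : ℝ) * C (1 / 2 : ℝ)) * ((1 + X 0) * (1 + X 0 * X 1)) := by
          ring
        rw [harr, hC441, one_mul]
      have hbase : (X 0 ^ 2 - 1 : MvP 2) ∈ J1 2 := by
        have heq : (X 0 ^ 2 - 1 : MvP 2)
            = (X 0 * C (4 : ℝ)) * qpoly ΘA - C (4 : ℝ) * qpoly ΘB := by
          rw [mul_assoc, hA4, hB4]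
          ring
        rw [heq]
        exact Ideal.sub_mem _
          (Ideal.mul_mem_left _ _ (Ideal.subset_span ⟨ΘA, hadmA, rfl⟩))
          (Ideal.mul_mem_left _ _ (Ideal.subset_span ⟨ΘB, hadmB, rfl⟩))
      fin_cases i
      · exact hbase
      · have := rename_mem_J1 (Equiv.swap 0 1) hbase
        rw [map_sub, map_one, map_pow, rename_X, Equiv.swap_apply_left] at this
        exact this
    | (e + 2), ih, i =>
      -- dimension e + 3 ≥ 3 : the inductive step
      set a0 : Fin (e + 3) := ⟨0, by omega⟩ with ha0def
      set a1 : Fin (e + 3) := ⟨1, by omega⟩ with ha1def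
      set a2 : Fin (e + 3) := ⟨2, by omega⟩ with ha2def
      have ha01 : a0 ≠ a1 := by simp [ha0def, ha1def, Fin.ext_iff]
      have ha02 : a0 ≠ a2 := by simp [ha0def, ha2def, Fin.ext_iff]
      have ha12 : a1 ≠ a2 := by simp [ha1def, ha2def, Fin.ext_iff]
      obtain ⟨j, l, hij, hil, hjl⟩ :
          ∃ j l : Fin (e + 3), i ≠ j ∧ i ≠ l ∧ j ≠ l := by
        by_cases h0 : i = a0
        · exact ⟨a1, a2, by rw [h0]; exact ha01, by rw [h0]; exact ha02, ha12⟩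
        · by_cases h1 : i = a1
          · exact ⟨a0, a2, by rw [h1]; exact Ne.symm ha01, by rw [h1]; exact ha12, ha02⟩
          · exact ⟨a0, a1, h0, h1, ha01⟩
      set β1 : Fin (e + 3) → ℕ := fun r => if r = j then 1 else 0 with hβ1
      set β3 : Fin (e + 3) → ℕ := fun r => if r = l then 1 else 0 with hβ3
      set β2 : Fin (e + 3) → ℕ :=
        fun r => (if r = j then 1 else 0) + (if r = l then 1 else 0) with hβ2
      have hP1 := PL ih i j hij β1 (fun r => by rw [hβ1]; dsimp only; split <;> omega)
        (by rw [hβ1]; dsimp only; rw [if_pos rfl])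
      have hP3 := PL ih i l hil β3 (fun r => by rw [hβ3]; dsimp only; split <;> omega)
        (by rw [hβ3]; dsimp only; rw [if_pos rfl])
      have hP2 := PL ih i j hij β2
        (fun r => by
          rw [hβ2]; dsimp only
          by_cases h1 : r = j
          · rw [if_pos h1, if_neg (h1 ▸ hjl), Nat.add_zero]
          · rw [if_neg h1]; split <;> omega)
        (by rw [hβ2]; dsimp only; rw [if_pos rfl, if_neg hjl])
      rw [single_pow_prod j] at hP1
      rw [single_pow_prod l] at hP3
      have hprod2 : (∏ r, (X r : MvP (e + 3)) ^ β2 r) = X j * X l := by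
        rw [hβ2]
        have : ∀ r : Fin (e + 3), (X r : MvP (e + 3))
              ^ ((if r = j then 1 else 0) + (if r = l then 1 else 0))
            = (X r) ^ (if r = j then 1 else 0) * (X r) ^ (if r = l then 1 else 0) :=
          fun r => pow_add _ _ _
        rw [Finset.prod_congr rfl fun r _ => this r, Finset.prod_mul_distrib,
          single_pow_prod j, single_pow_prod l]
      rw [hprod2] at hP2
      have hkey : (X i ^ 2 - 1 : MvP (e + 3))
          = C (1 / 2 : ℝ) * ((X i ^ 2 - 1) * (1 + X j))
            + C (1 / 2 : ℝ) * ((X i ^ 2 - 1) * (1 + X j * X l))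
            - (C (1 / 2 : ℝ) * X j) * ((X i ^ 2 - 1) * (1 + X l)) := by
        have h2 : (C (1 / 2 : ℝ) : MvP (e + 3)) + C (1 / 2 : ℝ) = 1 := by
          rw [← C_add]; norm_num
        calc (X i ^ 2 - 1 : MvP (e + 3))
            = (C (1 / 2 : ℝ) + C (1 / 2 : ℝ)) * (X i ^ 2 - 1) := by rw [h2, one_mul]
          _ = _ := by ring
      rw [hkey]
      exact Ideal.sub_mem _
        (Ideal.add_mem _ (Ideal.mul_mem_left _ _ hP1) (Ideal.mul_mem_left _ _ hP2))
        (Ideal.mul_mem_left _ _ hP3)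

/-! ### Division, grid and key lemmas -/

lemma finSuccEquiv_rename_succ {d : ℕ} (p : MvP d) :
    (MvPolynomial.finSuccEquiv ℝ d) (rename Fin.succ p) = Polynomial.C p := by
  have h : (((MvPolynomial.finSuccEquiv ℝ d) :
        MvPolynomial (Fin (d + 1)) ℝ →+* Polynomial (MvP d)).comp
      ((rename (Fin.succ : Fin d → Fin (d + 1)) : MvP d →ₐ[ℝ] MvPolynomial (Fin (d + 1)) ℝ) :
        MvP d →+* MvPolynomial (Fin (d + 1)) ℝ))
      = (Polynomial.C : MvP d →+* Polynomial (MvP d)) := by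
    apply MvPolynomial.ringHom_ext
    · intro a
      simp only [RingHom.coe_comp, RingHom.coe_coe, Function.comp_apply, rename_C]
      rw [MvPolynomial.finSuccEquiv_apply]
      simp
    · intro i
      simp only [RingHom.coe_comp, RingHom.coe_coe, Function.comp_apply, rename_X]
      rw [MvPolynomial.finSuccEquiv_X_succ]
  exact DFunLike.congr_fun h p

lemma finSuccEquiv_symm_C {d : ℕ} (p : MvP d) :
    (MvPolynomial.finSuccEquiv ℝ d).symm (Polynomial.C p) = rename Fin.succ p := by
  rw [← finSuccEquiv_rename_succ p, AlgEquiv.symm_apply_apply]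

lemma div_lemma {d : ℕ} (b : MvP (d + 1)) :
    ∃ (q : MvP (d + 1)) (r0 r1 : MvP d),
      b = (X 0 ^ 2 - 1) * q + rename Fin.succ r0 + X 0 * rename Fin.succ r1 := by
  set e := MvPolynomial.finSuccEquiv ℝ d with he
  set D : Polynomial (MvP d) := Polynomial.X ^ 2 - Polynomial.C 1 with hD
  have hmono : D.Monic := Polynomial.monic_X_pow_sub_C 1 (by norm_num)
  set P := e b with hP
  have hdiv : P %ₘ D + D * (P /ₘ D) = P := Polynomial.modByMonic_add_div P D
  set R := P %ₘ D with hRdef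
  have hdeg : R.degree < 2 := by
    have h2 : D.degree = 2 := by
      rw [hD]
      exact Polynomial.degree_X_pow_sub_C (by norm_num) 1
    rw [← h2]
    exact Polynomial.degree_modByMonic_lt P hmono
  have hdeg1 : R.degree ≤ 1 := by
    by_cases hR0 : R = 0
    · rw [hR0, Polynomial.degree_zero]
      exact bot_le
    · rw [Polynomial.degree_eq_natDegree hR0] at hdeg ⊢
      have h2 : R.natDegree < 2 := by exact_mod_cast hdeg
      exact_mod_cast Nat.lt_succ_iff.mp h2
  have hR : R = Polynomial.C (R.coeff 1) * Polynomial.X + Polynomial.C (R.coeff 0) :=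
    Polynomial.eq_X_add_C_of_degree_le_one hdeg1
  refine ⟨e.symm (P /ₘ D), R.coeff 0, R.coeff 1, ?_⟩
  have hsX : e.symm Polynomial.X = X 0 :=
    (AlgEquiv.symm_apply_eq e).mpr (MvPolynomial.finSuccEquiv_X_zero).symm
  have hsD : e.symm D = X 0 ^ 2 - 1 := by
    rw [hD, map_sub, map_pow, hsX, finSuccEquiv_symm_C, map_one]
  have hsymmR : e.symm R
      = rename Fin.succ (R.coeff 1) * X 0 + rename Fin.succ (R.coeff 0) := by
    conv_lhs => rw [hR]
    rw [map_add, map_mul, hsX, finSuccEquiv_symm_C, finSuccEquiv_symm_C]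
  calc b = e.symm (R + D * (P /ₘ D)) := by rw [hdiv]; exact (e.symm_apply_apply b).symm
    _ = e.symm R + e.symm D * e.symm (P /ₘ D) := by rw [map_add, map_mul]
    _ = (X 0 ^ 2 - 1) * e.symm (P /ₘ D) + rename Fin.succ (R.coeff 0)
        + X 0 * rename Fin.succ (R.coeff 1) := by
      rw [hsymmR, hsD]
      ring

lemma isPM_cons {d : ℕ} {s : ℝ} (hs : s = -1 ∨ s = 1) {ε' : Fin d → ℝ} (hε' : IsPM ε') :
    IsPM (Fin.cons s ε') := by
  intro i
  refine Fin.cases ?_ (fun i' => ?_) i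
  · rwa [Fin.cons_zero]
  · rw [Fin.cons_succ]
    exact hε' i'

lemma eval_cons_decomp {d : ℕ} {b q : MvP (d + 1)} {r0 r1 : MvP d}
    (hbeq : b = (X 0 ^ 2 - 1) * q + rename Fin.succ r0 + X 0 * rename Fin.succ r1)
    (s : ℝ) (ε' : Fin d → ℝ) :
    eval (Fin.cons s ε') b
      = (s ^ 2 - 1) * eval (Fin.cons s ε') q + eval ε' r0 + s * eval ε' r1 := by
  have hcomp : (Fin.cons s ε') ∘ (Fin.succ : Fin d → Fin (d + 1)) = ε' := by
    funext i
    simp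
  rw [hbeq, map_add, map_add, map_mul, map_mul, map_sub, map_pow, eval_X, map_one,
    eval_rename, eval_rename, hcomp, Fin.cons_zero]

lemma rename_succ_grid_mem {d : ℕ} {p : MvP d}
    (hp : p ∈ Ideal.span {p : MvP d | ∃ i : Fin d, p = X i ^ 2 - 1}) :
    rename (Fin.succ : Fin d → Fin (d + 1)) p
      ∈ Ideal.span {p : MvP (d + 1) | ∃ i : Fin (d + 1), p = X i ^ 2 - 1} := by
  have h1 := Ideal.mem_map_of_mem
    ((rename (Fin.succ : Fin d → Fin (d + 1)) : MvP d →ₐ[ℝ] MvP (d + 1)) :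
      MvP d →+* MvP (d + 1)) hp
  rw [Ideal.map_span] at h1
  refine Ideal.span_le.mpr ?_ h1
  rintro x ⟨y, ⟨i, rfl⟩, rfl⟩
  refine Ideal.subset_span ⟨i.succ, ?_⟩
  simp only [RingHom.coe_coe, map_sub, map_one, map_pow, rename_X]

lemma grid_lemma : ∀ {d : ℕ} (b : MvP d), (∀ ε : Fin d → ℝ, IsPM ε → eval ε b = 0) →
    b ∈ Ideal.span {p : MvP d | ∃ i : Fin d, p = X i ^ 2 - 1} := by
  intro d
  induction d with
  | zero =>
    intro b hb
    obtain ⟨r, rfl⟩ := (MvPolynomial.isEmptyAlgEquiv ℝ (Fin 0)).symm.surjective b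
    have h0 : (MvPolynomial.isEmptyAlgEquiv ℝ (Fin 0)).symm r = C r := rfl
    have := hb (fun i => i.elim0) (fun i => i.elim0)
    rw [h0, eval_C] at this
    rw [h0, this, map_zero]
    exact Ideal.zero_mem _
  | succ d ih =>
    intro b hb
    obtain ⟨q, r0, r1, hbeq⟩ := div_lemma b
    have hpm1 : ∀ ε' : Fin d → ℝ, IsPM ε' → eval ε' r0 + eval ε' r1 = 0 := by
      intro ε' hε'
      have := hb (Fin.cons 1 ε') (isPM_cons (Or.inr rfl) hε')
      rw [eval_cons_decomp hbeq 1 ε'] at this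
      rw [← this]
      ring
    have hpm2 : ∀ ε' : Fin d → ℝ, IsPM ε' → eval ε' r0 - eval ε' r1 = 0 := by
      intro ε' hε'
      have := hb (Fin.cons (-1) ε') (isPM_cons (Or.inl rfl) hε')
      rw [eval_cons_decomp hbeq (-1) ε'] at this
      rw [← this]
      ring
    have hr0 : ∀ ε' : Fin d → ℝ, IsPM ε' → eval ε' r0 = 0 := by
      intro ε' hε'
      have h1 := hpm1 ε' hε'
      have h2 := hpm2 ε' hε'
      linarith
    have hr1 : ∀ ε' : Fin d → ℝ, IsPM ε' → eval ε' r1 = 0 := by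
      intro ε' hε'
      have h1 := hpm1 ε' hε'
      have h2 := hpm2 ε' hε'
      linarith
    rw [hbeq]
    refine Ideal.add_mem _ (Ideal.add_mem _ ?_ ?_) ?_
    · exact Ideal.mul_mem_right _ _ (Ideal.subset_span ⟨0, rfl⟩)
    · exact rename_succ_grid_mem (ih r0 hr0)
    · exact Ideal.mul_mem_left _ _ (rename_succ_grid_mem (ih r1 hr1))

lemma grid_span_le_J1 {d : ℕ} :
    Ideal.span {p : MvP d | ∃ i : Fin d, p = X i ^ 2 - 1} ≤ J1 d := by
  refine Ideal.span_le.mpr ?_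
  rintro x ⟨i, rfl⟩
  exact KLA d i

lemma key_lemma : ∀ {d : ℕ} (b : MvP d),
    (∀ ε : Fin d → ℝ, IsPM ε → ε ≠ (fun _ => 1) → eval ε b = 0) → b ∈ J1 d := by
  intro d
  induction d with
  | zero =>
    intro b _
    have hone : (1 : MvP 0) ∈ J1 0 := by
      refine Ideal.subset_span ⟨(fun r c => 0 : Matrix (Fin 0) (Fin 0) ℤ), ?_, ?_⟩
      · exact ⟨fun r s => r.elim0, fun s => s.elim0, Or.inl (Matrix.det_fin_zero)⟩
      · unfold qpoly
        simp
    have : J1 0 = ⊤ := Ideal.eq_top_of_isUnit_mem _ hone isUnit_one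
    rw [this]
    exact Submodule.mem_top
  | succ d ih =>
    intro b hb
    obtain ⟨q, r0, r1, hbeq⟩ := div_lemma b
    -- at points (±1, ε') with ε' ≠ 1 both r0, r1 vanish
    have hcons_ne : ∀ (s : ℝ) (ε' : Fin d → ℝ), ε' ≠ (fun _ => 1) →
        Fin.cons s ε' ≠ (fun _ => (1 : ℝ)) := by
      intro s ε' hne h
      obtain ⟨i, hi⟩ := Function.ne_iff.mp hne
      apply hi
      have := congrFun h i.succ
      rwa [Fin.cons_succ] at this
    have hr1 : ∀ ε' : Fin d → ℝ, IsPM ε' → ε' ≠ (fun _ => 1) → eval ε' r1 = 0 := by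
      intro ε' hε' hne
      have h1 := hb (Fin.cons 1 ε') (isPM_cons (Or.inr rfl) hε') (hcons_ne 1 ε' hne)
      have h2 := hb (Fin.cons (-1) ε') (isPM_cons (Or.inl rfl) hε') (hcons_ne (-1) ε' hne)
      rw [eval_cons_decomp hbeq 1 ε'] at h1
      rw [eval_cons_decomp hbeq (-1) ε'] at h2
      have e1 : eval ε' r0 + eval ε' r1 = 0 := by rw [← h1]; ring
      have e2 : eval ε' r0 - eval ε' r1 = 0 := by rw [← h2]; ring
      linarith
    have hr0 : ∀ ε' : Fin d → ℝ, IsPM ε' → ε' ≠ (fun _ => 1) → eval ε' r0 = 0 := by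
      intro ε' hε' hne
      have h1 := hb (Fin.cons 1 ε') (isPM_cons (Or.inr rfl) hε') (hcons_ne 1 ε' hne)
      rw [eval_cons_decomp hbeq 1 ε'] at h1
      have := hr1 ε' hε' hne
      rw [this] at h1
      have : eval ε' r0 = 0 := by rw [← h1]; ring
      exact this
    -- g := r0 - r1 vanishes on the whole grid
    have hg : ∀ ε' : Fin d → ℝ, IsPM ε' → eval ε' (r0 - r1) = 0 := by
      intro ε' hε'
      by_cases hne : ε' = (fun _ => 1)
      · -- use point (-1, 1, ..., 1)
        have hpt := hb (Fin.cons (-1) ε') (isPM_cons (Or.inl rfl) hε') ?_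
        · rw [eval_cons_decomp hbeq (-1) ε'] at hpt
          rw [map_sub]
          have : eval ε' r0 - eval ε' r1 = 0 := by rw [← hpt]; ring
          exact this
        · intro h
          have := congrFun h 0
          rw [Fin.cons_zero] at this
          norm_num at this
      · rw [map_sub, hr0 ε' hε' hne, hr1 ε' hε' hne, sub_zero]
    have hgmem := grid_lemma (r0 - r1) hg
    have hmem1 : rename (Fin.succ : Fin d → Fin (d + 1)) (r0 - r1) ∈ J1 (d + 1) :=
      grid_span_le_J1 (rename_succ_grid_mem hgmem)
    have hmem2 : rename (Fin.succ : Fin d → Fin (d + 1)) r1 * (1 + X 0) ∈ J1 (d + 1) := by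
      have h := E1 (fun t : Fin (d + 1) => if t = 0 then 1 else 0)
        (fun r => by split <;> omega)
        (by show (if (0 : Fin (d + 1)) = 0 then 1 else 0) = 1; rw [if_pos rfl])
        (ih r1 hr1)
      rwa [single_pow_prod (0 : Fin (d + 1))] at h
    have hsplit : b = (X 0 ^ 2 - 1) * q + rename Fin.succ (r0 - r1)
        + rename Fin.succ r1 * (1 + X 0) := by
      rw [hbeq, map_sub]
      ring
    rw [hsplit]
    refine Ideal.add_mem _ (Ideal.add_mem _ ?_ hmem1) hmem2
    exact Ideal.mul_mem_right _ _ (KLA (d + 1) 0)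

/-! ### Coprimality bookkeeping -/

lemma Mpt_coprime {d : ℕ} {ε η : Fin d → ℝ} (hne : ε ≠ η) (h : ∃ i, ε i ≠ η i) :
    IsCoprime (Mpt ε) (Mpt η) := by
  obtain ⟨i, hi⟩ := h
  rw [Ideal.isCoprime_iff_sup_eq, Ideal.eq_top_iff_one]
  set cst : ℝ := (η i - ε i)⁻¹ with hcst
  have hne2 : η i - ε i ≠ 0 := sub_ne_zero.mpr (Ne.symm hi)
  have hu : (C cst * (X i - C (ε i)) : MvP d) ∈ Mpt ε :=
    Ideal.mul_mem_left _ _ (mem_Mpt.mpr (by simp))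
  have hv : (-(C cst * (X i - C (η i))) : MvP d) ∈ Mpt η :=
    neg_mem (Ideal.mul_mem_left _ _ (mem_Mpt.mpr (by simp)))
  have key : (1 : MvP d) = C cst * (X i - C (ε i)) + -(C cst * (X i - C (η i))) := by
    have h1 : (C cst * (X i - C (ε i)) + -(C cst * (X i - C (η i))) : MvP d)
        = C cst * (C (η i) - C (ε i)) := by ring
    rw [h1, ← C_sub, ← C_mul, hcst, inv_mul_cancel₀ hne2, C_1]
  rw [key]
  exact Submodule.add_mem _ (Ideal.mem_sup_left hu) (Ideal.mem_sup_right hv)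

noncomputable def Zfin (d : ℕ) : Finset (Fin d → ℝ) :=
  ((Finset.univ : Finset (Fin d → Bool)).image
    (fun g i => if g i then (1 : ℝ) else -1)).erase (fun _ => 1)

lemma mem_Zfin {d : ℕ} {ε : Fin d → ℝ} :
    ε ∈ Zfin d ↔ (IsPM ε ∧ ε ≠ fun _ => 1) := by
  rw [Zfin, Finset.mem_erase]
  constructor
  · rintro ⟨hne, hmem⟩
    rw [Finset.mem_image] at hmem
    obtain ⟨g, _, rfl⟩ := hmem
    refine ⟨fun i => ?_, hne⟩
    by_cases h : g i <;> simp [h]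
  · rintro ⟨hpm, hne⟩
    refine ⟨hne, Finset.mem_image.mpr
      ⟨fun i => if ε i = 1 then true else false, Finset.mem_univ _, ?_⟩⟩
    funext i
    by_cases h : ε i = 1
    · simp [h]
    · have h2 : ε i = -1 := (hpm i).resolve_right h
      show (if (if ε i = 1 then true else false) = true then (1 : ℝ) else -1) = ε i
      rw [if_neg h]
      simp [h2]

lemma prod_mem_pow {R : Type*} [CommRing R] (I : Ideal R) {ι : Type*} (s : Finset ι)
    (f : ι → R) (hf : ∀ i ∈ s, f i ∈ I) : (∏ i ∈ s, f i) ∈ I ^ s.card := by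
  have h := prod_pow_mem_pow I s f (fun _ => 1) hf
  simp only [pow_one] at h
  rwa [Finset.sum_const, smul_eq_mul, mul_one] at h

lemma inf_pow_le_J1pow {d k : ℕ} (b : MvP d)
    (hb : ∀ ε ∈ Zfin d, b ∈ (Mpt ε) ^ k) : b ∈ (J1 d) ^ k := by
  have hcop : ∀ ε ∈ Zfin d, ∀ η ∈ Zfin d, ε ≠ η → IsCoprime (Mpt ε ^ k) (Mpt η ^ k) := by
    intro ε _ η _ hneq
    exact (Mpt_coprime hneq (Function.ne_iff.mp hneq)).pow
  have hgen : ∀ (s : Finset (Fin d → ℝ)), s ⊆ Zfin d → (∀ ε ∈ s, b ∈ Mpt ε ^ k) →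
      b ∈ ∏ ε ∈ s, Mpt ε ^ k := by
    intro s
    induction s using Finset.induction_on with
    | empty =>
      intro _ _
      rw [Finset.prod_empty, Ideal.one_eq_top]
      exact Submodule.mem_top
    | @insert a s ha ih =>
      intro hsub hmem
      rw [Finset.prod_insert ha]
      have hIJ : IsCoprime (Mpt a ^ k) (∏ ε ∈ s, Mpt ε ^ k) := by
        refine IsCoprime.prod_right fun η hη => ?_
        refine hcop a (hsub (Finset.mem_insert_self a s)) η
          (hsub (Finset.mem_insert_of_mem hη)) ?_
        intro h
        exact ha (h ▸ hη)
      rw [← Ideal.inf_eq_mul_of_isCoprime hIJ]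
      exact ⟨hmem a (Finset.mem_insert_self a s),
        ih (fun x hx => hsub (Finset.mem_insert_of_mem hx))
          (fun ε hε => hmem ε (Finset.mem_insert_of_mem hε))⟩
  have hprod : b ∈ ∏ ε ∈ Zfin d, Mpt ε ^ k := hgen (Zfin d) (fun x hx => hx) hb
  rw [Finset.prod_pow] at hprod
  have h3 : (∏ ε ∈ Zfin d, Mpt ε) ≤ J1 d := by
    refine le_trans Ideal.prod_le_inf ?_
    intro x hx
    refine key_lemma x fun ε hPM hne => ?_
    exact mem_Mpt.mp (SetLike.le_def.mp (Finset.inf_le (mem_Zfin.mpr ⟨hPM, hne⟩)) hx)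
  exact Ideal.pow_right_mono h3 k hprod

lemma J1_pow_le {d : ℕ} (k : ℕ) :
    (J1 d) ^ k ≤ Ideal.span {p : MvP d |
      ∃ w : Fin k → Matrix (Fin d) (Fin d) ℤ, (∀ i, Adm (w i)) ∧ p = ∏ i, qpoly (w i)} := by
  induction k with
  | zero =>
    rw [pow_zero, Ideal.one_eq_top]
    have h1 : (1 : MvP d) ∈ Ideal.span {p : MvP d |
        ∃ w : Fin 0 → Matrix (Fin d) (Fin d) ℤ, (∀ i, Adm (w i)) ∧ p = ∏ i, qpoly (w i)} :=
      Ideal.subset_span ⟨fun i => i.elim0, fun i => i.elim0, by simp⟩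
    rw [Ideal.eq_top_of_isUnit_mem _ h1 isUnit_one]
  | succ k ih =>
    rw [pow_succ]
    refine le_trans (Ideal.mul_mono ih (le_refl (J1 d))) ?_
    rw [J1, Ideal.span_mul_span]
    refine Ideal.span_le.mpr ?_
    intro x hx
    simp only [Set.mem_mul] at hx
    obtain ⟨s, hs, t, ht, hxst⟩ := hx
    obtain ⟨w, hw, rfl⟩ := hs
    obtain ⟨Θ, hΘ, rfl⟩ := ht
    subst hxst
    refine Ideal.subset_span ⟨Fin.cons Θ w, ?_, ?_⟩
    · intro i
      refine Fin.cases ?_ (fun i' => ?_) i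
      · rwa [Fin.cons_zero]
      · rw [Fin.cons_succ]
        exact hw i'
    · rw [Fin.prod_univ_succ, Fin.cons_zero]
      have hcs : ∀ i : Fin k,
          qpoly ((Fin.cons Θ w : Fin (k + 1) → Matrix (Fin d) (Fin d) ℤ) i.succ)
            = qpoly (w i) := fun i => by rw [Fin.cons_succ]
      rw [Finset.prod_congr rfl fun i _ => hcs i]
      ring

/-- Theorem B (algebraic form): a polynomial `a` with `a(1,…,1) = 2^d` satisfies the zero
condition of order `k` iff `a = Σ_w c_w · 2^d · ∏_{i<k} q_{w i}` with `Σ_w c_w(1,…,1) = 1`,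
where `w` ranges over the `k`-tuples of `d×d` integer matrices with nonzero 0-1 columns
and determinant `±1`. -/
theorem stmt_12 (d k : ℕ) (hd : 1 ≤ d) (hk : 1 ≤ k) (a : MvPolynomial (Fin d) ℝ)
    (h1 : eval (fun _ => (1 : ℝ)) a = 2 ^ d) :
    (∀ j : Fin d → ℕ, (∑ i, j i) < k →
      ∀ ε : Fin d → ℝ, (∀ i, ε i = -1 ∨ ε i = 1) → ε ≠ (fun _ => 1) →
        eval ε (Dmulti j a) = 0) ↔
    ∃ (S : Finset (Fin k → Matrix (Fin d) (Fin d) ℤ))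
      (c : (Fin k → Matrix (Fin d) (Fin d) ℤ) → MvPolynomial (Fin d) ℝ),
      (∀ w, w ∈ S ↔ ∀ i : Fin k,
        ((∀ r s, w i r s = 0 ∨ w i r s = 1) ∧
         (∀ s, ∃ r, w i r s ≠ 0) ∧
         ((w i).det = 1 ∨ (w i).det = -1))) ∧
      a = ∑ w ∈ S, c w * (2 : MvPolynomial (Fin d) ℝ) ^ d * ∏ i : Fin k, qpoly (w i) ∧
      (∑ w ∈ S, eval (fun _ => (1 : ℝ)) (c w)) = 1 := by
  classical
  -- the finset of all admissible tuples
  set Bset : Finset (Fin k → Matrix (Fin d) (Fin d) ℤ) :=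
    (Finset.univ : Finset (Fin k → Fin d → Fin d → Bool)).image
      (fun f i => Matrix.of fun r s => if f i r s then (1 : ℤ) else 0) with hBset
  set S : Finset (Fin k → Matrix (Fin d) (Fin d) ℤ) :=
    Bset.filter (fun w => ∀ i, Adm (w i)) with hSdef
  have hmemS : ∀ w, w ∈ S ↔ ∀ i, Adm (w i) := by
    intro w
    rw [hSdef, Finset.mem_filter]
    constructor
    · exact fun h => h.2
    · intro h
      refine ⟨?_, h⟩
      rw [hBset, Finset.mem_image]
      refine ⟨fun i r s => if w i r s = 1 then true else false, Finset.mem_univ _, ?_⟩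
      funext i
      apply Matrix.ext
      intro r s
      show (if (if w i r s = 1 then true else false) = true then (1 : ℤ) else 0) = w i r s
      rcases (h i).1 r s with h0 | h1
      · simp [h0]
      · simp [h1]
  constructor
  · -- forward direction
    intro HZ
    have hawpow : ∀ ε ∈ Zfin d, a ∈ (Mpt ε) ^ k := by
      intro ε hε
      obtain ⟨hPM, hne⟩ := mem_Zfin.mp hε
      exact (zeroCond_iff_pow ε k a).mp (fun j hj => HZ j hj ε hPM hne)
    set w1 : Fin k → Matrix (Fin d) (Fin d) ℤ := fun _ => (1 : Matrix (Fin d) (Fin d) ℤ)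
      with hw1
    have hadm1 : ∀ i, Adm (w1 i) := by
      intro i
      refine ⟨fun r s => ?_, fun s => ⟨s, ?_⟩, Or.inl ?_⟩
      · rw [hw1]
        dsimp only
        rw [Matrix.one_apply]
        split
        · right; rfl
        · left; rfl
      · rw [hw1]
        dsimp only
        rw [Matrix.one_apply_eq]
        exact one_ne_zero
      · rw [hw1]
        dsimp only
        rw [Matrix.det_one]
    have hw1S : w1 ∈ S := (hmemS w1).mpr hadm1
    set t : MvP d := (2 : MvP d) ^ d * ∏ i : Fin k, qpoly (w1 i) with ht
    have htpow : ∀ ε ∈ Zfin d, t ∈ (Mpt ε) ^ k := by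
      intro ε hε
      obtain ⟨hPM, hne⟩ := mem_Zfin.mp hε
      refine Ideal.mul_mem_left _ _ ?_
      have hcard : (Finset.univ : Finset (Fin k)).card = k := by simp
      have h := prod_mem_pow (Mpt ε) Finset.univ (fun i => qpoly (w1 i))
        (fun i _ => qpoly_mem_Mpt (hadm1 i) hPM hne)
      rwa [hcard] at h
    have hbmem : a - t ∈ (J1 d) ^ k :=
      inf_pow_le_J1pow _ (fun ε hε => Ideal.sub_mem _ (hawpow ε hε) (htpow ε hε))
    have hbspan := J1_pow_le k hbmem
    have hrep : ∃ f : (Fin k → Matrix (Fin d) (Fin d) ℤ) → MvP d,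
        a - t = ∑ w ∈ S, f w * ∏ i, qpoly (w i) := by
      clear hbmem hawpow htpow HZ
      refine Submodule.span_induction ?_ ?_ ?_ ?_ hbspan
      · rintro x ⟨w, hw, rfl⟩
        refine ⟨fun w' => if w' = w then 1 else 0, ?_⟩
        have hterm : ∀ w' ∈ S, (if w' = w then (1 : MvP d) else 0) * ∏ i, qpoly (w' i)
            = if w' = w then ∏ i, qpoly (w' i) else 0 := by
          intro w' _
          split
          · rw [one_mul]
          · rw [zero_mul]
        rw [Finset.sum_congr rfl hterm,
          Finset.sum_ite_eq' S w (fun w' => ∏ i, qpoly (w' i)),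
          if_pos ((hmemS w).mpr hw)]
      · exact ⟨0, by simp⟩
      · rintro x y _ _ ⟨cx, hx⟩ ⟨cy, hy⟩
        refine ⟨fun w => cx w + cy w, ?_⟩
        rw [hx, hy, ← Finset.sum_add_distrib]
        exact Finset.sum_congr rfl fun w _ => by ring
      · rintro r x _ ⟨cx, hx⟩
        refine ⟨fun w => r * cx w, ?_⟩
        rw [smul_eq_mul, hx, Finset.mul_sum]
        exact Finset.sum_congr rfl fun w _ => by ring
    obtain ⟨f, hf⟩ := hrep
    have hCpow : (C ((1 / 2 : ℝ) ^ d) : MvP d) * (2 : MvP d) ^ d = 1 := by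
      have h2 : (2 : MvP d) = C (2 : ℝ) := (map_ofNat (C : ℝ →+* MvP d) 2).symm
      rw [h2, ← map_pow, ← C_mul, ← mul_pow]
      norm_num
    refine ⟨S, fun w => (if w = w1 then (1 : MvP d) else 0) + C ((1 / 2 : ℝ) ^ d) * f w,
      hmemS, ?_, ?_⟩
    · -- the representation
      have hterm1 : ∀ w ∈ S,
          ((if w = w1 then (1 : MvP d) else 0) + C ((1 / 2 : ℝ) ^ d) * f w)
              * (2 : MvP d) ^ d * ∏ i, qpoly (w i)
            = (if w = w1 then (2 : MvP d) ^ d * ∏ i, qpoly (w i) else 0)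
              + f w * ∏ i, qpoly (w i) := by
        intro w _
        rw [add_mul, add_mul]
        refine congrArg₂ (· + ·) ?_ ?_
        · split
          · rw [one_mul]
          · rw [zero_mul, zero_mul]
        · calc C ((1 / 2 : ℝ) ^ d) * f w * (2 : MvP d) ^ d * ∏ i, qpoly (w i)
              = (C ((1 / 2 : ℝ) ^ d) * (2 : MvP d) ^ d) * (f w * ∏ i, qpoly (w i)) := by
                ring
            _ = f w * ∏ i, qpoly (w i) := by rw [hCpow, one_mul]
      rw [Finset.sum_congr rfl hterm1, Finset.sum_add_distrib,
        Finset.sum_ite_eq' S w1 (fun w => (2 : MvP d) ^ d * ∏ i, qpoly (w i)),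
        if_pos hw1S, ← hf, ← ht]
      ring
    · -- the normalization
      have hone : ∀ Θ : Matrix (Fin d) (Fin d) ℤ,
          eval (fun _ => (1 : ℝ)) (qpoly Θ) = 1 := eval_one_qpoly
      have hevt : eval (fun _ => (1 : ℝ)) t = 2 ^ d := by
        rw [ht, map_mul, map_pow, map_prod,
          Finset.prod_congr rfl (fun i _ => hone (w1 i)), Finset.prod_const_one, mul_one]
        norm_num
      have hb1 : eval (fun _ => (1 : ℝ)) (a - t) = 0 := by
        rw [map_sub, h1, hevt, sub_self]
      have hsumf : (∑ w ∈ S, eval (fun _ => (1 : ℝ)) (f w)) = 0 := by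
        have hev := congrArg (eval fun _ => (1 : ℝ)) hf
        rw [hb1, map_sum] at hev
        have hterm : ∀ w ∈ S, eval (fun _ => (1 : ℝ)) (f w * ∏ i, qpoly (w i))
            = eval (fun _ => (1 : ℝ)) (f w) := by
          intro w _
          rw [map_mul, map_prod, Finset.prod_congr rfl (fun i _ => hone (w i)),
            Finset.prod_const_one, mul_one]
        rw [Finset.sum_congr rfl hterm] at hev
        exact hev.symm
      have hterm2 : ∀ w ∈ S,
          eval (fun _ => (1 : ℝ)) ((if w = w1 then (1 : MvP d) else 0)
              + C ((1 / 2 : ℝ) ^ d) * f w)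
            = (if w = w1 then (1 : ℝ) else 0)
              + (1 / 2 : ℝ) ^ d * eval (fun _ => (1 : ℝ)) (f w) := by
        intro w _
        rw [map_add, map_mul, eval_C]
        congr 1
        split
        · rw [map_one]
        · rw [map_zero]
      rw [Finset.sum_congr rfl hterm2, Finset.sum_add_distrib,
        Finset.sum_ite_eq' S w1 (fun _ => (1 : ℝ)), if_pos hw1S, ← Finset.mul_sum, hsumf,
        mul_zero, add_zero]
  · -- backward direction
    rintro ⟨S', c, hS', hrepr, -⟩
    intro j hj ε hPM hne
    have hmem : a ∈ (Mpt ε) ^ k := by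
      rw [hrepr]
      refine Ideal.sum_mem _ fun w hw => ?_
      have hadm := (hS' w).mp hw
      have hcard : (Finset.univ : Finset (Fin k)).card = k := by simp
      have hprod := prod_mem_pow (Mpt ε) Finset.univ (fun i => qpoly (w i))
        (fun i _ => qpoly_mem_Mpt (hadm i) hPM hne)
      rw [hcard] at hprod
      exact Ideal.mul_mem_left _ _ hprod
    exact (zeroCond_iff_pow ε k a).mpr hmem j hj
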